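/- Let W = M_1 M_2 ⋯ M_m be a product of n×n Boolean matrices that is entrywise positive, where each M_i either has at most one 1 per row, or has the form eₖᵀe (k-th row all ones, other rows zero). If at least one of the M_i is of the form eₖᵀe and U is the maximal prefix M_1 ⋯ M_t before the first such matrix, then U has an all-ones column. -/

import Mathlib

/-- Boolean matrix product: `(A * B)[i,j] = 1` iff `∃ k, A[i,k] = B[k,j] = 1`. -/
def bmul {n : ℕ} (A B : Matrix (Fin n) (Fin n) Bool) : Matrix (Fin n) (Fin n) Bool :=
  fun i j => decide (∃ k, A i k = true ∧ B k j = true)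

/-- Boolean identity matrix. -/
def bid (n : ℕ) : Matrix (Fin n) (Fin n) Bool := fun i j => decide (i = j)

/-- Product of a list of Boolean matrices. -/
def bprod {n : ℕ} (L : List (Matrix (Fin n) (Fin n) Bool)) : Matrix (Fin n) (Fin n) Bool :=
  L.foldr bmul (bid n)

/-- A Boolean matrix is (entrywise) positive if all its entries are 1. -/
def bpos {n : ℕ} (A : Matrix (Fin n) (Fin n) Bool) : Prop := ∀ i j, A i j = true

/-- A set of Boolean matrices is primitive if some nonempty product of its elements
is entrywise positive. -/
def Primitive {n : ℕ} (M : Set (Matrix (Fin n) (Fin n) Bool)) : Prop :=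
  ∃ L : List (Matrix (Fin n) (Fin n) Bool),
    L ≠ [] ∧ (∀ A ∈ L, A ∈ M) ∧ bpos (bprod L)

/-- The exponent of a primitive set: the length of the shortest positive product. -/
noncomputable def expSet {n : ℕ} (M : Set (Matrix (Fin n) (Fin n) Bool)) : ℕ :=
  sInf {m | ∃ L : List (Matrix (Fin n) (Fin n) Bool),
    L.length = m ∧ L ≠ [] ∧ (∀ A ∈ L, A ∈ M) ∧ bpos (bprod L)}

/-- A Boolean matrix has at most one 1 per row (adjacency matrix of a partial function). -/
def atMostOnePerRow {n : ℕ} (A : Matrix (Fin n) (Fin n) Bool) : Prop :=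
  ∀ i j j', A i j = true → A i j' = true → j = j'

/-- The matrix `eₖᵀe`: its `k`-th row is all ones, all other rows are zero. -/
def rowOnes {n : ℕ} (k : Fin n) : Matrix (Fin n) (Fin n) Bool :=
  fun i _ => decide (i = k)

lemma bmul_assoc {n : ℕ} (A B C : Matrix (Fin n) (Fin n) Bool) :
    bmul (bmul A B) C = bmul A (bmul B C) := by
  funext i j
  simp only [bmul, decide_eq_decide]
  refine decide_eq_decide.mpr ?_
  constructor
  · rintro ⟨x, hx, hc⟩
    rw [decide_eq_true_iff] at hx
    obtain ⟨y, ha, hb⟩ := hx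
    exact ⟨y, ha, decide_eq_true_iff.mpr ⟨x, hb, hc⟩⟩
  · rintro ⟨y, ha, hx⟩
    rw [decide_eq_true_iff] at hx
    obtain ⟨x, hb, hc⟩ := hx
    exact ⟨x, decide_eq_true_iff.mpr ⟨y, ha, hb⟩, hc⟩

lemma bid_bmul {n : ℕ} (A : Matrix (Fin n) (Fin n) Bool) : bmul (bid n) A = A := by
  funext i j
  simp only [bmul, bid]
  by_cases h : A i j = true
  · rw [h]
    exact decide_eq_true ⟨i, by simp, h⟩
  · simp only [h]
    refine decide_eq_false_iff_not.mpr ?_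
    rintro ⟨x, hx, ha⟩
    rw [decide_eq_true_iff] at hx
    subst hx
    exact h ha

lemma bprod_append {n : ℕ} (a b : List (Matrix (Fin n) (Fin n) Bool)) :
    bprod (a ++ b) = bmul (bprod a) (bprod b) := by
  induction a with
  | nil => simp [bprod, bid_bmul]
  | cons A t ih =>
      show bmul A (bprod (t ++ b)) = bmul (bmul A (bprod t)) (bprod b)
      rw [ih, bmul_assoc]

theorem prefix_before_first_rowOnes_has_ones_column {n : ℕ}
    (L₁ L₂ : List (Matrix (Fin n) (Fin n) Bool)) (k : Fin n)
    (hall : ∀ A ∈ L₁ ++ rowOnes k :: L₂, atMostOnePerRow A ∨ ∃ k', A = rowOnes k')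
    (hpref : ∀ A ∈ L₁, ¬ ∃ k', A = rowOnes k')
    (hpos : bpos (bprod (L₁ ++ rowOnes k :: L₂))) :
    ∃ c, ∀ r, bprod L₁ r c = true := by
  refine ⟨k, fun r => ?_⟩
  have h := hpos r k
  rw [bprod_append] at h
  simp only [bmul, decide_eq_true_iff] at h
  obtain ⟨x, h1, h2⟩ := h
  have h2' : bmul (rowOnes k) (bprod L₂) x k = true := h2
  simp only [bmul, decide_eq_true_iff] at h2'
  obtain ⟨z, hz, -⟩ := h2'
  simp only [rowOnes, decide_eq_true_iff] at hz
  subst hz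
  exact h1
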